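/- Let G₁ be the graph on Cantor space 2^ω in which distinct x, y are adjacent iff x(n) = y(n) for all but finitely many n. Then every subset A ⊆ 2^ω that has the Baire property and is G₁-independent is meagre. Consequently, G₁ admits no proper coloring with countably many colors in which every color class has the Baire property; in particular its Borel chromatic number is uncountable. -/
import Mathlib


open MeasureTheory Topology Filter Set

/-- Adjacency in the graph `G₁` on Cantor space: distinct sequences are
adjacent iff they differ in only finitely many coordinates. -/
def G1Adj (x y : ℕ → Bool) : Prop :=
  x ≠ y ∧ {n | x n ≠ y n}.Finite

theorem flip_continuous (n : ℕ) :
    Continuous (fun x : ℕ → Bool => fun i => if i = n then !(x i) else x i) := by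
  apply continuous_pi
  intro i
  by_cases h : i = n
  · subst h
    simp only [if_pos rfl]
    exact Continuous.comp (continuous_of_discreteTopology : Continuous Bool.not) (continuous_apply i)
  · simp only [if_neg h]
    exact continuous_apply i

/-- The flip-one-coordinate homeomorphism of Cantor space. -/
def flipHomeo (n : ℕ) : (ℕ → Bool) ≃ₜ (ℕ → Bool) where
  toFun x := fun i => if i = n then !(x i) else x i
  invFun x := fun i => if i = n then !(x i) else x i
  left_inv x := by funext i; by_cases h : i = n <;> simp [h]
  right_inv x := by funext i; by_cases h : i = n <;> simp [h]
  continuous_toFun := flip_continuous n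
  continuous_invFun := flip_continuous n

theorem G1_independent_baire_meagre (A : Set (ℕ → Bool)) (hA : BaireMeasurableSet A)
    (hInd : ∀ x ∈ A, ∀ y ∈ A, ¬G1Adj x y) : IsMeagre A := by
  obtain ⟨u, hu, hAu⟩ := hA.residualEq_isOpen
  by_cases hne : u = ∅
  · subst hne
    have : Aᶜ ∈ residual _ := by
      filter_upwards [hAu] with x hx
      intro hxA
      exact cast hx hxA
    exact this
  · exfalso
    obtain ⟨a, ha⟩ := Set.nonempty_iff_ne_empty.mpr hne
    obtain ⟨I, v, hv, hsub⟩ := isOpen_pi_iff.mp hu a ha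
    -- the basic cylinder
    set cyl : Set (ℕ → Bool) := {x | ∀ i ∈ I, x i = a i} with hcyl
    have hcylsub : cyl ⊆ u := by
      intro x hx
      apply hsub
      intro i hi
      rw [hx i hi]
      exact (hv i hi).2
    have hcylopen : IsOpen cyl := by
      have : cyl = (↑I : Set ℕ).pi (fun i => {a i}) := by
        ext x; simp [hcyl, Set.mem_pi]
      rw [this]
      exact isOpen_set_pi I.finite_toSet (fun i _ => isOpen_discrete _)
    have hcylne : cyl.Nonempty := ⟨a, fun i _ => rfl⟩
    -- a coordinate outside I
    obtain ⟨n, hn⟩ := I.exists_notMem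
    set f := flipHomeo n with hf
    -- the residual set where A agrees with u, both at x and at f x
    have h1 : {x : ℕ → Bool | x ∈ A ↔ x ∈ u} ∈ residual _ := by
      filter_upwards [hAu] with x hx
      exact iff_of_eq hx
    have h2 : f ⁻¹' {x : ℕ → Bool | x ∈ A ↔ x ∈ u} ∈ residual _ := by
      have hm := f.residual_map_eq
      rw [← hm] at h1
      exact h1
    have hres : {x | (x ∈ A ↔ x ∈ u) ∧ (f x ∈ A ↔ f x ∈ u)} ∈ residual _ := by
      filter_upwards [h1, h2] with x hx1 hx2
      exact ⟨hx1, hx2⟩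
    have hdense : Dense {x | (x ∈ A ↔ x ∈ u) ∧ (f x ∈ A ↔ f x ∈ u)} :=
      dense_of_mem_residual hres
    obtain ⟨x, hx, hxcyl⟩ := hdense.exists_mem_open hcylopen hcylne
    obtain ⟨hx1, hx2⟩ := hx
    have hxA : x ∈ A := hx1.mpr (hcylsub hxcyl)
    have hfeval : ∀ i, f x i = if i = n then !(x i) else x i := fun i => rfl
    have hfxcyl : f x ∈ cyl := by
      intro i hi
      have hin : i ≠ n := fun h => hn (h ▸ hi)
      rw [hfeval, if_neg hin]
      exact hxcyl i hi
    have hfxA : f x ∈ A := hx2.mpr (hcylsub hfxcyl)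
    apply hInd x hxA (f x) hfxA
    constructor
    · intro h
      have h2 : x n = f x n := congrFun h n
      rw [hfeval, if_pos rfl] at h2
      simp at h2
    · apply Set.Finite.subset (Set.finite_singleton n)
      intro i hi
      simp only [Set.mem_setOf_eq] at hi
      by_contra hin
      apply hi
      rw [hfeval, if_neg (by simpa using hin)]

/-- Every `G₁`-independent set with the Baire property is meagre; consequently
`G₁` admits no proper colouring with countably many colour classes all having
the Baire property, and in particular its Borel chromatic number is
uncountable. -/
theorem G1_independent_baire_meagre_and_chromatic_uncountable :
    (∀ A : Set (ℕ → Bool), BaireMeasurableSet A →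
      (∀ x ∈ A, ∀ y ∈ A, ¬G1Adj x y) → IsMeagre A) ∧
    (¬∃ c : (ℕ → Bool) → ℕ, (∀ x y, G1Adj x y → c x ≠ c y) ∧
        ∀ n, BaireMeasurableSet (c ⁻¹' {n})) ∧
    (¬∃ c : (ℕ → Bool) → ℕ, (∀ x y, G1Adj x y → c x ≠ c y) ∧
        ∀ n, MeasurableSet (c ⁻¹' {n})) := by
  have main := G1_independent_baire_meagre
  have noBaire : ¬∃ c : (ℕ → Bool) → ℕ, (∀ x y, G1Adj x y → c x ≠ c y) ∧
      ∀ n, BaireMeasurableSet (c ⁻¹' {n}) := by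
    rintro ⟨c, hc, hB⟩
    have hmeagre : ∀ n, IsMeagre (c ⁻¹' {n}) := by
      intro n
      apply main _ (hB n)
      intro x hx y hy hadj
      apply hc x y hadj
      simp only [Set.mem_preimage, Set.mem_singleton_iff] at hx hy
      rw [hx, hy]
    have huniv : IsMeagre (Set.univ : Set (ℕ → Bool)) := by
      have heq : (Set.univ : Set (ℕ → Bool)) = ⋃ n, c ⁻¹' {n} := by
        ext x; simp
      rw [heq]
      exact isMeagre_iUnion hmeagre
    have hd : Dense ((Set.univ : Set (ℕ → Bool))ᶜ) := dense_of_mem_residual huniv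
    rw [Set.compl_univ] at hd
    obtain ⟨y, hy⟩ := hd.nonempty
    exact hy
  refine ⟨main, noBaire, ?_⟩
  rintro ⟨c, hc, hM⟩
  exact noBaire ⟨c, hc, fun n => (hM n).baireMeasurableSet⟩
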